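/- Let n ≥ 2 and let σ be a permutation of {1,…,n}, acting linearly on the deleted permutation module, i.e. the subspace {v ∈ ℂ^n : Σᵢ vᵢ = 0} of ℂ^n with the group acting by permuting coordinates. Then σ acts with simple spectrum on this (n-1)-dimensional space (its action is diagonalizable with n-1 pairwise distinct eigenvalues) if and only if σ has at most two orbits on {1,…,n} and, in case σ has exactly two orbits, their lengths are coprime. -/

import Mathlib

open Equiv

/-- The linear functional `v ↦ ∑ i, v i` on `ℂ^n`. -/
noncomputable def coordSum (n : ℕ) : (Fin n → ℂ) →ₗ[ℂ] ℂ :=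
  ∑ i : Fin n, LinearMap.proj i

/-- The deleted permutation module `{v ∈ ℂ^n : ∑ i, v i = 0}`. -/
noncomputable def deletedPermModule (n : ℕ) : Submodule ℂ (Fin n → ℂ) :=
  LinearMap.ker (coordSum n)

open Finset
section
variable {n : ℕ} (σ : Equiv.Perm (Fin n))

def orb (x : Fin n) : Finset (Fin n) := if σ x = x then {x} else (σ.cycleOf x).support

lemma isCycleOn_orb (x : Fin n) : σ.IsCycleOn (orb σ x) := by
  unfold orb
  split_ifs with h
  · simpa [Equiv.Perm.isCycleOn_singleton] using h
  · exact σ.isCycleOn_support_cycleOf x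

lemma mem_orb {x y : Fin n} : y ∈ orb σ x ↔ σ.SameCycle x y := by
  unfold orb
  split_ifs with h
  · simp only [Finset.mem_singleton]
    constructor
    · rintro rfl; exact Equiv.Perm.SameCycle.refl _ _
    · rintro ⟨i, rfl⟩
      simp [Equiv.Perm.zpow_apply_eq_self_of_apply_eq_self h]
  · rw [Equiv.Perm.mem_support_cycleOf_iff]
    simp [Equiv.Perm.mem_support, h]

lemma mem_orb_self (x : Fin n) : x ∈ orb σ x := (mem_orb σ).2 (Equiv.Perm.SameCycle.refl _ _)

lemma orb_card_pos (x : Fin n) : 0 < #(orb σ x) := Finset.card_pos.2 ⟨x, mem_orb_self σ x⟩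

noncomputable def eigVec (x : Fin n) (ζ : ℂ) : Fin n → ℂ :=
  fun j => ∑ m ∈ Finset.range #(orb σ x), if (σ ^ m) x = j then ζ ^ m else 0

lemma eigVec_base (x : Fin n) (ζ : ℂ) : eigVec σ x ζ x = 1 := by
  unfold eigVec
  rw [Finset.sum_eq_single_of_mem 0 (Finset.mem_range.2 (orb_card_pos σ x))]
  · simp
  · intro m hm hm0
    rw [if_neg, ]
    intro hfix
    have := ((isCycleOn_orb σ x).pow_apply_eq (mem_orb_self σ x)).1 hfix
    exact hm0 (Nat.eq_zero_of_dvd_of_lt this (Finset.mem_range.1 hm))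

lemma eigVec_zero_of_not_sameCycle {x j : Fin n} (h : ¬σ.SameCycle x j) (ζ : ℂ) :
    eigVec σ x ζ j = 0 := by
  unfold eigVec
  refine Finset.sum_eq_zero fun m _ => ?_
  rw [if_neg]
  rintro rfl
  exact h ⟨m, by simp⟩

lemma eigVec_relation (x : Fin n) {ζ : ℂ} (hζ : ζ ^ #(orb σ x) = 1) (j : Fin n) :
    eigVec σ x ζ (σ⁻¹ j) = ζ⁻¹ * eigVec σ x ζ j := by
  have hζ0 : ζ ≠ 0 := by
    intro h
    rw [h, zero_pow (orb_card_pos σ x).ne'] at hζ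
    exact zero_ne_one hζ
  set p := #(orb σ x) with hp
  set f : ℕ → ℂ := fun m => if (σ ^ m) x = j then ζ ^ m else 0 with hf
  have key : ζ * eigVec σ x ζ (σ⁻¹ j) = eigVec σ x ζ j := by
    have step1 : ζ * eigVec σ x ζ (σ⁻¹ j) = ∑ m ∈ Finset.range p, f (m + 1) := by
      unfold eigVec
      rw [Finset.mul_sum]
      refine Finset.sum_congr rfl fun m _ => ?_
      rw [hf, mul_ite, mul_zero, mul_comm ζ (ζ ^ m), ← pow_succ]
      congr 1
      simp only [eq_iff_iff]
      rw [pow_succ', Equiv.Perm.mul_apply]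
      exact Equiv.Perm.eq_inv_iff_eq
    have hfp : f p = f 0 := by
      rw [hf]
      simp only [pow_zero]
      rw [(isCycleOn_orb σ x).pow_card_apply (mem_orb_self σ x), hζ]
      simp
      by_cases hxj : x = j <;> simp [hxj]
    have step2 : ∑ m ∈ Finset.range p, f (m + 1) = ∑ m ∈ Finset.range p, f m := by
      have h1 := Finset.sum_range_succ' f p
      have h2 := Finset.sum_range_succ f p
      rw [h2, hfp] at h1
      exact (add_right_cancel h1).symm
    rw [step1, step2]
    rfl
  rw [← key, inv_mul_cancel_left₀ hζ0]


lemma sum_eigVec (x : Fin n) (ζ : ℂ) :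
    ∑ j, eigVec σ x ζ j = ∑ m ∈ Finset.range #(orb σ x), ζ ^ m := by
  unfold eigVec
  rw [Finset.sum_comm]
  refine Finset.sum_congr rfl fun m _ => ?_
  simp

lemma sum_eigVec_eq_zero (x : Fin n) {ζ : ℂ} (hζ : ζ ^ #(orb σ x) = 1) (h1 : ζ ≠ 1) :
    ∑ j, eigVec σ x ζ j = 0 := by
  rw [sum_eigVec, geom_sum_eq h1, hζ, sub_self, zero_div]

lemma sum_eigVec_one (x : Fin n) : ∑ j, eigVec σ x 1 j = (#(orb σ x) : ℂ) := by
  rw [sum_eigVec]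
  simp

lemma coordSum_apply (v : Fin n → ℂ) : coordSum n v = ∑ j, v j := by
  unfold coordSum
  rw [LinearMap.sum_apply]
  rfl

lemma mem_deleted {v : Fin n → ℂ} : v ∈ deletedPermModule n ↔ ∑ j, v j = 0 := by
  rw [deletedPermModule, LinearMap.mem_ker, coordSum_apply]

lemma finrank_deleted (hn : 2 ≤ n) : Module.finrank ℂ (deletedPermModule n) = n - 1 := by
  have hsur : LinearMap.range (coordSum n) = ⊤ := by
    rw [LinearMap.range_eq_top]
    intro c
    refine ⟨fun _ => c / n, ?_⟩
    rw [coordSum_apply]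
    rw [Finset.sum_const, Finset.card_univ, Fintype.card_fin]
    have : (n : ℂ) ≠ 0 := Nat.cast_ne_zero.2 (by omega)
    rw [nsmul_eq_mul]
    field_simp
  have h := LinearMap.finrank_range_add_finrank_ker (coordSum n)
  rw [hsur] at h
  simp only [finrank_top, Module.finrank_self] at h
  have hpi : Module.finrank ℂ (Fin n → ℂ) = n := by simp
  rw [hpi] at h
  unfold deletedPermModule
  omega


lemma no_two_indep (b : Module.Basis (Fin (n - 1)) ℂ (deletedPermModule n)) (μ : Fin (n - 1) → ℂ)
    (hinj : Function.Injective μ)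
    (heig : ∀ i : Fin (n - 1), ∀ j : Fin n,
      (b i : Fin n → ℂ) (σ⁻¹ j) = μ i * (b i : Fin n → ℂ) j)
    (c : ℂ) (u₁ u₂ : deletedPermModule n)
    (h1 : ∀ j, (u₁ : Fin n → ℂ) (σ⁻¹ j) = c * (u₁ : Fin n → ℂ) j)
    (h2 : ∀ j, (u₂ : Fin n → ℂ) (σ⁻¹ j) = c * (u₂ : Fin n → ℂ) j)
    (hind : LinearIndependent ℂ ![(u₁ : Fin n → ℂ), (u₂ : Fin n → ℂ)]) : False := by
  have hbind : LinearIndependent ℂ (fun i => ((b i : deletedPermModule n) : Fin n → ℂ)) :=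
    b.linearIndependent.map' (deletedPermModule n).subtype (Submodule.ker_subtype _)
  -- key claim: any eigenvector of value c has repr supported on {i | μ i = c}
  have key : ∀ u : deletedPermModule n,
      (∀ j, (u : Fin n → ℂ) (σ⁻¹ j) = c * (u : Fin n → ℂ) j) →
      ∀ i, μ i ≠ c → b.repr u i = 0 := by
    intro u hu i hi
    have hsum : (u : Fin n → ℂ) = ∑ k, b.repr u k • ((b k : deletedPermModule n) : Fin n → ℂ) := by
      conv_lhs => rw [← b.sum_repr u]
      push_cast
      rfl
    have hz : ∑ k, ((b.repr u k * μ k) - c * b.repr u k) •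
        ((b k : deletedPermModule n) : Fin n → ℂ) = 0 := by
      funext j
      have e1 : (u : Fin n → ℂ) (σ⁻¹ j) = ∑ k, b.repr u k * (μ k * (b k : Fin n → ℂ) j) := by
        rw [hsum]
        simp only [Finset.sum_apply, Pi.smul_apply, smul_eq_mul]
        exact Finset.sum_congr rfl fun k _ => by rw [heig k j]
      have e2 : (u : Fin n → ℂ) j = ∑ k, b.repr u k * (b k : Fin n → ℂ) j := by
        rw [hsum]; simp
      have := hu j
      rw [e1, e2, Finset.mul_sum] at this
      simp only [Finset.sum_apply, Pi.smul_apply, smul_eq_mul, Pi.zero_apply, sub_mul]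
      rw [Finset.sum_sub_distrib]
      rw [sub_eq_zero]
      calc ∑ k, b.repr u k * μ k * (b k : Fin n → ℂ) j
          = ∑ k, b.repr u k * (μ k * (b k : Fin n → ℂ) j) :=
            Finset.sum_congr rfl fun k _ => by ring
        _ = ∑ k, c * (b.repr u k * (b k : Fin n → ℂ) j) := this
        _ = ∑ k, c * b.repr u k * (b k : Fin n → ℂ) j :=
            Finset.sum_congr rfl fun k _ => by ring
    have := Fintype.linearIndependent_iff.1 hbind _ hz i
    have h3 : b.repr u i * (μ i - c) = 0 := by ring_nf; ring_nf at this; linear_combination this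
    rcases mul_eq_zero.1 h3 with h | h
    · exact h
    · exact absurd (sub_eq_zero.1 h) hi
  have hne1 : (u₁ : Fin n → ℂ) ≠ 0 := hind.ne_zero 0
  by_cases hex : ∃ i₀, μ i₀ = c
  · obtain ⟨i₀, hi₀⟩ := hex
    have hrep : ∀ u : deletedPermModule n,
        (∀ j, (u : Fin n → ℂ) (σ⁻¹ j) = c * (u : Fin n → ℂ) j) →
        (u : Fin n → ℂ) = b.repr u i₀ • ((b i₀ : deletedPermModule n) : Fin n → ℂ) := by
      intro u hu
      have hsum : (u : Fin n → ℂ) = ∑ k, b.repr u k • ((b k : deletedPermModule n) : Fin n → ℂ) := by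
        conv_lhs => rw [← b.sum_repr u]
        push_cast
        rfl
      rw [hsum, Finset.sum_eq_single i₀]
      · intro k _ hk
        have : μ k ≠ c := fun hc => hk (hinj (hc.trans hi₀.symm))
        rw [key u hu k this, zero_smul]
      · intro h; exact absurd (Finset.mem_univ i₀) h
    have e1 := hrep u₁ h1
    have e2 := hrep u₂ h2
    obtain ⟨hs, ht⟩ := LinearIndependent.pair_iff.1 hind (b.repr u₂ i₀) (-(b.repr u₁ i₀)) (by
      rw [e1, e2]
      rw [smul_smul, smul_smul]
      rw [← add_smul]
      ring_nf
      simp)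
    rw [e1, neg_eq_zero.1 ht] at hne1
    simp at hne1
  · push_neg at hex
    have : ∀ i, b.repr u₁ i = 0 := fun i => key u₁ h1 i (hex i)
    have hz : (u₁ : deletedPermModule n) = 0 := by
      apply b.repr.injective
      rw [map_zero]
      ext i
      simp [this i]
    apply hne1
    rw [hz]
    rfl


lemma orb_card_of_fixed {x : Fin n} (h : σ x = x) : #(orb σ x) = 1 := by
  rw [orb, if_pos h, Finset.card_singleton]

lemma orb_eq_of_factor {c : Equiv.Perm (Fin n)} (hc : c ∈ σ.cycleFactorsFinset)
    {x : Fin n} (hx : x ∈ c.support) : orb σ x = c.support := by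
  have hxs : x ∈ σ.support := Equiv.Perm.mem_cycleFactorsFinset_support_le hc hx
  have hmove : σ x ≠ x := Equiv.Perm.mem_support.1 hxs
  rw [orb, if_neg hmove, ← Equiv.Perm.cycle_is_cycleOf hx hc]

lemma exists_reps : ∃ R : Finset (Fin n),
    (∀ x ∈ R, ∀ y ∈ R, σ.SameCycle x y → x = y) ∧
    (∀ z : Fin n, ∃ x ∈ R, σ.SameCycle x z) ∧
    Multiset.map (fun x => #(orb σ x)) R.val
      = σ.cycleType + Multiset.replicate (n - σ.support.card) 1 := by
  classical
  have hne : ∀ c : {c // c ∈ σ.cycleFactorsFinset}, c.1.support.Nonempty := by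
    intro c
    rw [Finset.nonempty_iff_ne_empty, Ne, Equiv.Perm.support_eq_empty_iff]
    exact ((Equiv.Perm.mem_cycleFactorsFinset_iff.1 c.2).1).ne_one
  set pt : {c // c ∈ σ.cycleFactorsFinset} → Fin n := fun c => (hne c).choose with hptdef
  have hpt : ∀ c, pt c ∈ c.1.support := fun c => (hne c).choose_spec
  have hptinj : Function.Injective pt := by
    intro c₁ c₂ h
    by_contra hne12
    have hne' : c₁.1 ≠ c₂.1 := fun h' => hne12 (Subtype.ext h')
    have hdisj := (σ.cycleFactorsFinset_pairwise_disjoint c₁.2 c₂.2 hne').disjoint_support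
    exact Finset.disjoint_left.1 hdisj (hpt c₁) (h ▸ hpt c₂)
  have hdis : Disjoint σ.supportᶜ (Finset.map ⟨pt, hptinj⟩ Finset.univ) := by
    rw [Finset.disjoint_right]
    intro x hx
    simp only [Finset.mem_map, Finset.mem_univ, true_and, Function.Embedding.coeFn_mk] at hx
    obtain ⟨c, rfl⟩ := hx
    simp only [Finset.mem_compl]
    intro h
    exact h (Equiv.Perm.mem_cycleFactorsFinset_support_le c.2 (hpt c))
  refine ⟨Finset.disjUnion σ.supportᶜ (Finset.map ⟨pt, hptinj⟩ Finset.univ) hdis, ?_, ?_, ?_⟩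
  · intro x hx y hy hxy
    simp only [Finset.mem_disjUnion, Finset.mem_compl, Equiv.Perm.mem_support, not_not,
      Finset.mem_map, Finset.mem_univ, true_and, Function.Embedding.coeFn_mk] at hx hy
    rcases hx with hx | ⟨c, rfl⟩
    · rcases hy with hy | ⟨c, rfl⟩
      · obtain ⟨i, rfl⟩ := hxy
        exact (Equiv.Perm.zpow_apply_eq_self_of_apply_eq_self hx i).symm
      · obtain ⟨i, hi⟩ := hxy
        rw [Equiv.Perm.zpow_apply_eq_self_of_apply_eq_self hx i] at hi
        exact hi
    · rcases hy with hy | ⟨c', rfl⟩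
      · obtain ⟨i, hi⟩ := hxy.symm
        rw [Equiv.Perm.zpow_apply_eq_self_of_apply_eq_self hy i] at hi
        exact hi.symm
      · have h1 : σ.cycleOf (pt c) = σ.cycleOf (pt c') := hxy.cycleOf_eq
        have h2 : c.1 = σ.cycleOf (pt c) := Equiv.Perm.cycle_is_cycleOf (hpt c) c.2
        have h3 : c'.1 = σ.cycleOf (pt c') := Equiv.Perm.cycle_is_cycleOf (hpt c') c'.2
        have : c = c' := Subtype.ext (by rw [h2, h3, h1])
        rw [this]
  · intro z
    by_cases hz : σ z = z
    · exact ⟨z, Finset.mem_disjUnion.2 (Or.inl (by simp [Equiv.Perm.mem_support, hz])),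
        Equiv.Perm.SameCycle.refl _ _⟩
    · have hzc : σ.cycleOf z ∈ σ.cycleFactorsFinset :=
        Equiv.Perm.cycleOf_mem_cycleFactorsFinset_iff.2 (Equiv.Perm.mem_support.2 hz)
      set c : {c // c ∈ σ.cycleFactorsFinset} := ⟨σ.cycleOf z, hzc⟩ with hc
      refine ⟨pt c, Finset.mem_disjUnion.2 (Or.inr ?_), ?_⟩
      · simp only [Finset.mem_map, Finset.mem_univ, true_and, Function.Embedding.coeFn_mk]
        exact ⟨c, rfl⟩
      · have := hpt c
        rw [hc] at this
        have h := Equiv.Perm.mem_support_cycleOf_iff.1 this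
        exact h.1.symm
  · rw [show (σ.supportᶜ.disjUnion (Finset.map ⟨pt, hptinj⟩ Finset.univ) hdis).val
        = σ.supportᶜ.val + (Finset.map ⟨pt, hptinj⟩ Finset.univ).val from rfl, Multiset.map_add]
    rw [add_comm]
    congr 1
    · -- cycle part
      rw [Finset.map_val, Multiset.map_map]
      have : σ.cycleType = (σ.cycleFactorsFinset.attach.val.map
          (fun c => (Finset.card ∘ Equiv.Perm.support) c.1)) := by
        rw [Equiv.Perm.cycleType_def]
        conv_lhs => rw [← Multiset.attach_map_val σ.cycleFactorsFinset.val]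
        rw [Multiset.map_map]
        rfl
      rw [this]
      congr 1
      funext c
      simp only [Function.comp_apply, Function.Embedding.coeFn_mk]
      rw [orb_eq_of_factor σ c.2 (hpt c)]
    · -- fixed part
      rw [Multiset.eq_replicate]
      constructor
      · rw [Multiset.card_map]
        simp [Finset.card_compl]
      · intro b hb
        obtain ⟨x, hx, rfl⟩ := Multiset.mem_map.1 hb
        rw [← Finset.mem_def, Finset.mem_compl, Equiv.Perm.mem_support, not_not] at hx
        exact orb_card_of_fixed σ hx

lemma sum_M : (σ.cycleType + Multiset.replicate (n - σ.support.card) 1).sum = n := by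
  rw [Multiset.sum_add, Equiv.Perm.sum_cycleType, Multiset.sum_replicate, smul_eq_mul, mul_one]
  have : σ.support.card ≤ n := by
    simpa using Finset.card_le_card (Finset.subset_univ σ.support)
  omega


lemma nthRoots_inter {p q : ℕ} (hp : 0 < p) (hq : 0 < q) (hco : Nat.Coprime p q) :
    Polynomial.nthRootsFinset p (1 : ℂ) ∩ Polynomial.nthRootsFinset q (1 : ℂ) = {1} := by
  ext z
  simp only [Finset.mem_inter, Polynomial.mem_nthRootsFinset hp,
    Polynomial.mem_nthRootsFinset hq, Finset.mem_singleton]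
  constructor
  · rintro ⟨h1, h2⟩
    have hz0 : z ≠ 0 := by
      intro h
      rw [h, zero_pow hp.ne'] at h1
      exact zero_ne_one h1
    have hbez := Nat.gcd_eq_gcd_ab p q
    rw [hco] at hbez
    calc z = z ^ (1 : ℤ) := (zpow_one z).symm
      _ = z ^ ((p : ℤ) * Nat.gcdA p q + (q : ℤ) * Nat.gcdB p q) := by
          rw [← hbez]; norm_num
      _ = (z ^ (p : ℕ)) ^ Nat.gcdA p q * (z ^ (q : ℕ)) ^ Nat.gcdB p q := by
          rw [zpow_add₀ hz0, zpow_mul, zpow_mul, zpow_natCast, zpow_natCast]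
      _ = 1 := by rw [h1, h2, one_zpow, one_zpow, one_mul]
  · rintro rfl
    exact ⟨one_pow p, one_pow q⟩

lemma card_nthRoots (p : ℕ) (hp : 0 < p) : #(Polynomial.nthRootsFinset p (1 : ℂ)) = p :=
  (Complex.isPrimitiveRoot_exp p hp.ne').card_nthRootsFinset

lemma build_basis (hn : 2 ≤ n) (S : Finset ℂ) (hcard : #S = n - 1)
    (v : ℂ → (Fin n → ℂ))
    (hv : ∀ ζ ∈ S, v ζ ∈ deletedPermModule n ∧ v ζ ≠ 0 ∧
      ∀ j, v ζ (σ⁻¹ j) = ζ * v ζ j) :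
    ∃ (b : Module.Basis (Fin (n - 1)) ℂ (deletedPermModule n)) (μ : Fin (n - 1) → ℂ),
      Function.Injective μ ∧
      ∀ i : Fin (n - 1), ∀ j : Fin n,
        (b i : Fin n → ℂ) (σ⁻¹ j) = μ i * (b i : Fin n → ℂ) j := by
  classical
  set P : Module.End ℂ (Fin n → ℂ) := LinearMap.funLeft ℂ ℂ (⇑σ⁻¹) with hP
  have hPapp : ∀ (u : Fin n → ℂ) (j : Fin n), P u j = u (σ⁻¹ j) := fun u j => rfl
  have hEig : ∀ ζ : S, P.HasEigenvector (ζ : ℂ) (v ζ) := by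
    intro ζ
    obtain ⟨hmem, hne, hrel⟩ := hv ζ ζ.2
    refine ⟨Module.End.mem_eigenspace_iff.2 ?_, hne⟩
    funext j
    rw [hPapp, hrel j]
    rfl
  have hind0 : LinearIndependent ℂ (fun ζ : S => v ζ) :=
    P.eigenvectors_linearIndependent' (fun ζ : S => (ζ : ℂ)) Subtype.coe_injective _ hEig
  set w : S → deletedPermModule n := fun ζ => ⟨v ζ, (hv ζ ζ.2).1⟩ with hw
  have hindw : LinearIndependent ℂ w := by
    apply LinearIndependent.of_comp (deletedPermModule n).subtype
    exact hind0
  have hScard : Fintype.card S = n - 1 := by rw [Fintype.card_coe, hcard]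
  have hfr : Fintype.card S = Module.finrank ℂ (deletedPermModule n) := by
    rw [hScard, finrank_deleted hn]
  haveI : Nonempty S := by
    rw [← Fintype.card_pos_iff, hScard]
    omega
  let B := basisOfLinearIndependentOfCardEqFinrank hindw hfr
  have hB : ∀ ζ : S, B ζ = w ζ := fun ζ => by
    rw [coe_basisOfLinearIndependentOfCardEqFinrank]
  let e : S ≃ Fin (n - 1) := Fintype.equivFinOfCardEq hScard
  refine ⟨B.reindex e, fun i => ((e.symm i : ℂ)), ?_, ?_⟩
  · intro i₁ i₂ h
    exact e.symm.injective (Subtype.coe_injective h)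
  · intro i j
    rw [Module.Basis.reindex_apply, hB]
    exact (hv _ (e.symm i).2).2.2 j


lemma invariant_vec_mem (x y : Fin n) :
    ((#(orb σ y) : ℂ) • eigVec σ x 1 - (#(orb σ x) : ℂ) • eigVec σ y 1) ∈ deletedPermModule n := by
  rw [mem_deleted]
  simp only [Pi.sub_apply, Pi.smul_apply, smul_eq_mul]
  rw [Finset.sum_sub_distrib, ← Finset.mul_sum, ← Finset.mul_sum, sum_eigVec_one, sum_eigVec_one]
  ring

lemma invariant_vec_rel (x y : Fin n) (j : Fin n) :
    ((#(orb σ y) : ℂ) • eigVec σ x 1 - (#(orb σ x) : ℂ) • eigVec σ y 1) (σ⁻¹ j)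
      = 1 * ((#(orb σ y) : ℂ) • eigVec σ x 1 - (#(orb σ x) : ℂ) • eigVec σ y 1) j := by
  simp only [Pi.sub_apply, Pi.smul_apply, smul_eq_mul]
  rw [eigVec_relation σ x (one_pow _) j, eigVec_relation σ y (one_pow _) j, inv_one]
  ring

lemma pair_eq {p q a b : ℕ} (h : ({p, q} : Multiset ℕ) = {a, b}) :
    (p = a ∧ q = b) ∨ (p = b ∧ q = a) := by
  have hp : p ∈ ({a, b} : Multiset ℕ) := h ▸ Multiset.mem_cons_self _ _
  rcases Multiset.mem_cons.1 hp with rfl | hp'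
  · left
    refine ⟨rfl, ?_⟩
    have := (Multiset.cons_inj_right p).1 h
    exact Multiset.singleton_inj.1 this
  · rw [Multiset.mem_singleton] at hp'
    subst hp'
    right
    refine ⟨rfl, ?_⟩
    rw [Multiset.pair_comm a p] at h
    have := (Multiset.cons_inj_right p).1 h
    exact Multiset.singleton_inj.1 this

end

/-- Let `n ≥ 2` and let `σ` be a permutation of `{1,…,n}`, acting on the deleted
permutation module `{v ∈ ℂ^n : ∑ᵢ vᵢ = 0}` by permuting coordinates.  Then `σ` acts with simple
spectrum on this `(n-1)`-dimensional space (diagonalizably, with `n-1` pairwise distinct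
eigenvalues) if and only if `σ` has at most two orbits on `{1,…,n}`, of coprime lengths when
there are exactly two orbits. -/
theorem deleted_perm_simple_spectrum_iff
    (n : ℕ) (hn : 2 ≤ n) (σ : Equiv.Perm (Fin n)) :
    (∃ (b : Module.Basis (Fin (n - 1)) ℂ (deletedPermModule n)) (μ : Fin (n - 1) → ℂ),
        Function.Injective μ ∧
        ∀ i : Fin (n - 1), ∀ j : Fin n,
          (b i : Fin n → ℂ) (σ⁻¹ j) = μ i * (b i : Fin n → ℂ) j)
    ↔ (Multiset.card (σ.cycleType + Multiset.replicate (n - σ.support.card) 1) = 1 ∨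
       ∃ a b : ℕ, σ.cycleType + Multiset.replicate (n - σ.support.card) 1 = {a, b} ∧
         Nat.Coprime a b) := by
  classical
  set M := σ.cycleType + Multiset.replicate (n - σ.support.card) 1 with hM
  obtain ⟨R, hpair, hcover, hmap⟩ := exists_reps σ
  have hcardM : Multiset.card M = R.card := by
    rw [hM, ← hmap, Multiset.card_map]
    rfl
  have hsum : M.sum = n := sum_M σ
  have hnsc : ∀ u ∈ R, ∀ w ∈ R, u ≠ w → ¬σ.SameCycle u w :=
    fun u hu w hw hne h => hne (hpair u hu w hw h)
  constructor
  · rintro ⟨b, μ, hinj, heig⟩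
    by_cases h3 : 2 < R.card
    · exfalso
      obtain ⟨x, y, z, hx, hy, hz, hxy, hxz, hyz⟩ := Finset.two_lt_card_iff.1 h3
      have exy : eigVec σ x 1 y = 0 :=
        eigVec_zero_of_not_sameCycle σ (hnsc x hx y hy hxy) 1
      have exz : eigVec σ x 1 z = 0 :=
        eigVec_zero_of_not_sameCycle σ (hnsc x hx z hz hxz) 1
      have eyz : eigVec σ y 1 z = 0 :=
        eigVec_zero_of_not_sameCycle σ (hnsc y hy z hz hyz) 1
      have ezy : eigVec σ z 1 y = 0 :=
        eigVec_zero_of_not_sameCycle σ (hnsc z hz y hy hyz.symm) 1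
      set u₁ : deletedPermModule n :=
        ⟨(#(orb σ y) : ℂ) • eigVec σ x 1 - (#(orb σ x) : ℂ) • eigVec σ y 1,
          invariant_vec_mem σ x y⟩ with hu₁
      set u₂ : deletedPermModule n :=
        ⟨(#(orb σ z) : ℂ) • eigVec σ x 1 - (#(orb σ x) : ℂ) • eigVec σ z 1,
          invariant_vec_mem σ x z⟩ with hu₂
      have hcx : (#(orb σ x) : ℂ) ≠ 0 := Nat.cast_ne_zero.2 (orb_card_pos σ x).ne'
      refine no_two_indep σ b μ hinj heig 1 u₁ u₂
        (fun j => invariant_vec_rel σ x y j) (fun j => invariant_vec_rel σ x z j) ?_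
      rw [LinearIndependent.pair_iff]
      intro s t hst
      have hsy := congrFun hst y
      have hsz := congrFun hst z
      simp only [hu₁, hu₂, Pi.add_apply, Pi.smul_apply, smul_eq_mul, Pi.zero_apply,
        Pi.sub_apply, exy, exz, eyz, ezy, eigVec_base, mul_zero, mul_one, zero_sub,
        sub_zero, mul_neg] at hsy hsz
      constructor
      · have : s * (#(orb σ x) : ℂ) = 0 := by linear_combination -hsy
        exact (mul_eq_zero.1 this).resolve_right hcx
      · have : t * (#(orb σ x) : ℂ) = 0 := by linear_combination -hsz
        exact (mul_eq_zero.1 this).resolve_right hcx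
    · push_neg at h3
      have h0 : R.card ≠ 0 := by
        intro h0
        rw [h0] at hcardM
        rw [Multiset.card_eq_zero.1 hcardM] at hsum
        simp at hsum
        omega
      by_cases hc1 : R.card = 1
      · left
        rw [hcardM, hc1]
      · have hc : R.card = 2 := by omega
        right
        obtain ⟨x, y, hxy, hR⟩ := Finset.card_eq_two.1 hc
        have hxR : x ∈ R := by rw [hR]; simp
        have hyR : y ∈ R := by rw [hR]; simp
        have hMval : M = {#(orb σ x), #(orb σ y)} := by
          rw [hM, ← hmap, hR, Finset.insert_val_of_notMem (by simp [hxy])]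
          rfl
        refine ⟨#(orb σ x), #(orb σ y), hMval, ?_⟩
        by_contra hco
        set d := Nat.gcd #(orb σ x) #(orb σ y) with hd
        have hd1 : d ≠ 1 := hco
        have hdpos : 0 < d := Nat.gcd_pos_of_pos_left _ (orb_card_pos σ x)
        have hd2 : 2 ≤ d := by omega
        set ζ : ℂ := Complex.exp (2 * Real.pi * Complex.I / d) with hζ
        have hprim : IsPrimitiveRoot ζ d := Complex.isPrimitiveRoot_exp d (by omega)
        have hζ1 : ζ ≠ 1 := hprim.ne_one hd2
        have hζd : ζ ^ d = 1 := hprim.pow_eq_one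
        have hζp : ζ ^ #(orb σ x) = 1 := by
          obtain ⟨t, ht⟩ := Nat.gcd_dvd_left #(orb σ x) #(orb σ y)
          rw [← hd] at ht
          rw [ht, pow_mul, hζd, one_pow]
        have hζq : ζ ^ #(orb σ y) = 1 := by
          obtain ⟨t, ht⟩ := Nat.gcd_dvd_right #(orb σ x) #(orb σ y)
          rw [← hd] at ht
          rw [ht, pow_mul, hζd, one_pow]
        set u₁ : deletedPermModule n :=
          ⟨eigVec σ x ζ, mem_deleted.2 (sum_eigVec_eq_zero σ x hζp hζ1)⟩ with hu₁
        set u₂ : deletedPermModule n :=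
          ⟨eigVec σ y ζ, mem_deleted.2 (sum_eigVec_eq_zero σ y hζq hζ1)⟩ with hu₂
        refine no_two_indep σ b μ hinj heig ζ⁻¹ u₁ u₂
          (fun j => eigVec_relation σ x hζp j) (fun j => eigVec_relation σ y hζq j) ?_
        rw [LinearIndependent.pair_iff]
        intro s t hst
        have hsx := congrFun hst x
        have hsy := congrFun hst y
        simp only [hu₁, hu₂, Pi.add_apply, Pi.smul_apply, smul_eq_mul, Pi.zero_apply,
          eigVec_base,
          eigVec_zero_of_not_sameCycle σ (hnsc y hyR x hxR hxy.symm) ζ,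
          eigVec_zero_of_not_sameCycle σ (hnsc x hxR y hyR hxy) ζ,
          mul_zero, mul_one, add_zero, zero_add] at hsx hsy
        exact ⟨hsx, hsy⟩
  · rintro (h1 | ⟨a, c, hab, hco⟩)
    · -- single cycle case
      rw [hcardM] at h1
      obtain ⟨x, hR⟩ := Finset.card_eq_one.1 h1
      have hMval : M = {#(orb σ x)} := by rw [hM, ← hmap, hR]; rfl
      have horb : #(orb σ x) = n := by
        rw [hMval] at hsum
        simpa using hsum
      refine build_basis σ hn ((Polynomial.nthRootsFinset n (1 : ℂ)).erase 1)
        (by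
          rw [Finset.card_erase_of_mem
            ((Polynomial.mem_nthRootsFinset (by omega) (1 : ℂ)).2 (one_pow n)),
            card_nthRoots n (by omega)])
        (fun ζ => eigVec σ x ζ⁻¹) ?_
      intro ζ hζS
      obtain ⟨hζ1, hζmem⟩ := Finset.mem_erase.1 hζS
      have hζn : ζ ^ n = 1 := (Polynomial.mem_nthRootsFinset (by omega : 0 < n) (1 : ℂ)).1 hζmem
      have hinv1 : ζ⁻¹ ≠ 1 := fun h => hζ1 (inv_eq_one.1 h)
      have hinvp : (ζ⁻¹) ^ #(orb σ x) = 1 := by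
        rw [horb, inv_pow, hζn, inv_one]
      refine ⟨mem_deleted.2 (sum_eigVec_eq_zero σ x hinvp hinv1), ?_, ?_⟩
      · intro h
        exact one_ne_zero ((eigVec_base σ x ζ⁻¹).symm.trans (congrFun h x))
      · intro j
        show eigVec σ x ζ⁻¹ (σ⁻¹ j) = ζ * eigVec σ x ζ⁻¹ j
        rw [eigVec_relation σ x hinvp j, inv_inv]
    · -- two cycles case
      have hcard2 : R.card = 2 := by
        rw [← hcardM, hab]
        rfl
      obtain ⟨x, y, hxy, hR⟩ := Finset.card_eq_two.1 hcard2
      have hxR : x ∈ R := by rw [hR]; simp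
      have hyR : y ∈ R := by rw [hR]; simp
      have hMval : M = {#(orb σ x), #(orb σ y)} := by
        rw [hM, ← hmap, hR, Finset.insert_val_of_notMem (by simp [hxy])]
        rfl
      set p := #(orb σ x) with hp
      set q := #(orb σ y) with hq
      have hcop : Nat.Coprime p q := by
        rcases pair_eq (hMval.symm.trans hab) with ⟨h1, h2⟩ | ⟨h1, h2⟩
        · rw [h1, h2]; exact hco
        · rw [h1, h2]; exact hco.symm
      have hpq : p + q = n := by
        rw [hMval] at hsum
        simpa using hsum
      have hppos : 0 < p := orb_card_pos σ x
      have hqpos : 0 < q := orb_card_pos σ y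
      have hinter := nthRoots_inter hppos hqpos hcop
      refine build_basis σ hn (Polynomial.nthRootsFinset p (1 : ℂ) ∪ Polynomial.nthRootsFinset q (1 : ℂ))
        (by
          have := Finset.card_union_add_card_inter (Polynomial.nthRootsFinset p (1 : ℂ))
            (Polynomial.nthRootsFinset q (1 : ℂ))
          rw [hinter, card_nthRoots p hppos, card_nthRoots q hqpos,
            Finset.card_singleton] at this
          omega)
        (fun ζ => if ζ = 1 then (q : ℂ) • eigVec σ x 1 - (p : ℂ) • eigVec σ y 1
          else if ζ ^ p = 1 then eigVec σ x ζ⁻¹ else eigVec σ y ζ⁻¹) ?_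
      intro ζ hζS
      beta_reduce
      by_cases hζ1 : ζ = 1
      · subst hζ1
        rw [if_pos rfl]
        refine ⟨invariant_vec_mem σ x y, ?_, fun j => invariant_vec_rel σ x y j⟩
        intro h
        have := congrFun h x
        simp only [Pi.sub_apply, Pi.smul_apply, smul_eq_mul, Pi.zero_apply, eigVec_base,
          eigVec_zero_of_not_sameCycle σ (hnsc y hyR x hxR hxy.symm) 1, mul_zero,
          mul_one, sub_zero] at this
        exact Nat.cast_ne_zero.2 hqpos.ne' this
      · by_cases hζp : ζ ^ p = 1
        · have hshow : (if ζ = 1 then (q : ℂ) • eigVec σ x 1 - (p : ℂ) • eigVec σ y 1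
              else if ζ ^ p = 1 then eigVec σ x ζ⁻¹ else eigVec σ y ζ⁻¹) = eigVec σ x ζ⁻¹ := by
            rw [if_neg hζ1, if_pos hζp]
          show _ ∧ _ ∧ _
          rw [hshow]
          have hinv1 : ζ⁻¹ ≠ 1 := fun h => hζ1 (inv_eq_one.1 h)
          have hinvp : (ζ⁻¹) ^ p = 1 := by rw [inv_pow, hζp, inv_one]
          refine ⟨mem_deleted.2 (sum_eigVec_eq_zero σ x hinvp hinv1), ?_, ?_⟩
          · intro h
            exact one_ne_zero ((eigVec_base σ x ζ⁻¹).symm.trans (congrFun h x))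
          · intro j
            rw [eigVec_relation σ x hinvp j, inv_inv]
        · have hshow : (if ζ = 1 then (q : ℂ) • eigVec σ x 1 - (p : ℂ) • eigVec σ y 1
              else if ζ ^ p = 1 then eigVec σ x ζ⁻¹ else eigVec σ y ζ⁻¹) = eigVec σ y ζ⁻¹ := by
            rw [if_neg hζ1, if_neg hζp]
          show _ ∧ _ ∧ _
          rw [hshow]
          have hζq : ζ ^ q = 1 := by
            rcases Finset.mem_union.1 hζS with h | h
            · exact absurd ((Polynomial.mem_nthRootsFinset hppos (1 : ℂ)).1 h) hζp
            · exact (Polynomial.mem_nthRootsFinset hqpos (1 : ℂ)).1 h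
          have hinv1 : ζ⁻¹ ≠ 1 := fun h => hζ1 (inv_eq_one.1 h)
          have hinvq : (ζ⁻¹) ^ q = 1 := by rw [inv_pow, hζq, inv_one]
          refine ⟨mem_deleted.2 (sum_eigVec_eq_zero σ y hinvq hinv1), ?_, ?_⟩
          · intro h
            exact one_ne_zero ((eigVec_base σ y ζ⁻¹).symm.trans (congrFun h y))
          · intro j
            rw [eigVec_relation σ y hinvq j, inv_inv]
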